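/- Let m = 2 and let p_1, p_2 be (arbitrarily dependent) random variables each uniform on [0,1], both true nulls. For the step-up test with critical values 0 < α_1 < α_2 < 1, the FDR satisfies FDR ≤ min(α_1 + α_2, 1). -/

import Mathlib

open MeasureTheory ProbabilityTheory Finset
open scoped Classical
noncomputable section

/-- `#{i : p i ≤ t}`, i.e. `m·F̂_m(t)`. -/
def countLE {m : ℕ} (p : Fin m → ℝ) (t : ℝ) : ℕ :=
  (Finset.univ.filter (fun i => p i ≤ t)).card

/-- The `i`-th order statistic `p_{i:m}` (for `1 ≤ i ≤ m`), characterized by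
`p_{i:m} ≤ t ↔ i ≤ #{k : p k ≤ t}`. -/
def orderStat {m : ℕ} (p : Fin m → ℝ) (i : ℕ) : ℝ :=
  sInf {t | i ≤ countLE p t}

/-- Step-up rejection number `R = max {j : p_{j:m} ≤ α_j}` (`max ∅ = 0`). -/
def suR {m : ℕ} (α : ℕ → ℝ) (p : Fin m → ℝ) : ℕ :=
  WithBot.unbotD 0 (((Finset.range (m+1)).filter (fun j => 1 ≤ j ∧ orderStat p j ≤ α j)).max)

/-- Step-down rejection number `R = max {j : p_{i:m} ≤ α_i for all i ≤ j}`. -/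
def sdR {m : ℕ} (α : ℕ → ℝ) (p : Fin m → ℝ) : ℕ :=
  WithBot.unbotD 0 (((Finset.range (m+1)).filter
    (fun j => ∀ i ∈ Finset.Icc 1 j, orderStat p i ≤ α i)).max)

/-- FDR `= E[V / max(R,1)]` for rejection number `R` and rejection rule `rej`. -/
def FDR {Ω : Type*} [MeasurableSpace Ω] (μ : Measure Ω) {m : ℕ}
    (p : Ω → Fin m → ℝ) (I0 : Finset (Fin m))
    (R : (Fin m → ℝ) → ℕ) (rej : (Fin m → ℝ) → Fin m → Prop) : ℝ :=
  ∫ ω, ((I0.filter (fun i => rej (p ω) i)).card : ℝ) / (max (R (p ω)) 1 : ℕ) ∂μ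

/-- FDR of the step-up test with critical values `α`. -/
def suFDR {Ω : Type*} [MeasurableSpace Ω] (μ : Measure Ω) {m : ℕ}
    (α : ℕ → ℝ) (p : Ω → Fin m → ℝ) (I0 : Finset (Fin m)) : ℝ :=
  FDR μ p I0 (suR α) (fun q i => q i ≤ α (suR α q))

/-- FDR of the step-down test with critical values `α`
(rejecting the hypotheses belonging to `p_{i:m}`, `i ≤ R`). -/
def sdFDR {Ω : Type*} [MeasurableSpace Ω] (μ : Measure Ω) {m : ℕ}
    (α : ℕ → ℝ) (p : Ω → Fin m → ℝ) (I0 : Finset (Fin m)) : ℝ :=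
  FDR μ p I0 (sdR α) (fun q i => 1 ≤ sdR α q ∧ q i ≤ orderStat q (sdR α q))

/-- Benjamini–Hochberg critical values `b_j = jα/m`. -/
def bh (m : ℕ) (α : ℝ) (j : ℕ) : ℝ := j * α / m

/-- The uniform distribution on `[0,1]`. -/
def unif01 : Measure ℝ := volume.restrict (Set.Icc 0 1)

/-- For `m = 2`, arbitrarily dependent uniform p-values (both
nulls true) and a step-up test with critical values `0 < α₁ < α₂ < 1`,
`FDR ≤ min(α₁ + α₂, 1)`. -/
lemma countLE_two (q : Fin 2 → ℝ) (t : ℝ) :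
    countLE q t = (if q 0 ≤ t then 1 else 0) + (if q 1 ≤ t then 1 else 0) := by
  rw [countLE, Finset.card_filter, Fin.sum_univ_two]

lemma orderStat_two_one (q : Fin 2 → ℝ) : orderStat q 1 = min (q 0) (q 1) := by
  have h : {t | 1 ≤ countLE q t} = Set.Ici (min (q 0) (q 1)) := by
    ext t
    simp only [Set.mem_setOf_eq, countLE_two, Set.mem_Ici, min_le_iff]
    split_ifs <;> simp_all
  rw [orderStat, h, csInf_Ici]

lemma orderStat_two_two (q : Fin 2 → ℝ) : orderStat q 2 = max (q 0) (q 1) := by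
  have h : {t | 2 ≤ countLE q t} = Set.Ici (max (q 0) (q 1)) := by
    ext t
    simp only [Set.mem_setOf_eq, countLE_two, Set.mem_Ici, max_le_iff]
    split_ifs <;> simp_all
  rw [orderStat, h, csInf_Ici]

lemma suR_char (a1 a2 : ℝ) (q : Fin 2 → ℝ) :
    suR (fun j => if j = 0 then 0 else if j = 1 then a1 else a2) q
      = if max (q 0) (q 1) ≤ a2 then 2 else if min (q 0) (q 1) ≤ a1 then 1 else 0 := by
  have hr : Finset.range 3 = ({0, 1, 2} : Finset ℕ) := by decide
  unfold suR
  rw [show (2:ℕ)+1 = 3 from rfl, hr]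
  by_cases h2 : max (q 0) (q 1) ≤ a2 <;> by_cases h1 : min (q 0) (q 1) ≤ a1 <;>
    simp [Finset.filter_insert, Finset.filter_singleton, orderStat_two_one,
      orderStat_two_two, h1, h2, WithBot.unbotD_coe] <;> rfl


/-- STATEMENT 6 marker kept above -/
theorem su_two_dependent_bound
    {Ω : Type*} [MeasurableSpace Ω] (μ : Measure Ω) [IsProbabilityMeasure μ]
    (a1 a2 : ℝ) (ha1 : 0 < a1) (h12 : a1 < a2) (ha2 : a2 < 1)
    (p : Ω → Fin 2 → ℝ)
    (hmeas : ∀ i, Measurable (fun ω => p ω i))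
    -- both p-values uniformly distributed on [0,1] (arbitrary joint dependence)
    (hunif : ∀ i : Fin 2, Measure.map (fun ω => p ω i) μ = unif01) :
    suFDR μ (fun j => if j = 0 then 0 else if j = 1 then a1 else a2) p Finset.univ
      ≤ min (a1 + a2) 1 := by
  classical
  set A : ℕ → ℝ := fun j => if j = 0 then 0 else if j = 1 then a1 else a2 with hA
  set E1 : Set Ω := (fun ω => p ω 0) ⁻¹' Set.Iic a1 with hE1
  set E2 : Set Ω := (fun ω => p ω 1) ⁻¹' Set.Iic a1 with hE2
  set E3 : Set Ω := (fun ω => p ω 0) ⁻¹' Set.Ioc a1 a2 with hE3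
  set G : Set Ω := E1 ∪ E2 ∪ E3 with hG
  have hGm : MeasurableSet G :=
    (((hmeas 0) measurableSet_Iic).union ((hmeas 1) measurableSet_Iic)).union
      ((hmeas 0) measurableSet_Ioc)
  have hmap : ∀ (i : Fin 2) (s : Set ℝ), MeasurableSet s →
      μ ((fun ω => p ω i) ⁻¹' s) = volume (s ∩ Set.Icc 0 1) := by
    intro i s hs
    rw [← Measure.map_apply (hmeas i) hs, hunif i, unif01, Measure.restrict_apply hs]
  -- a.e. positivity of p-values
  have hpos : ∀ (i : Fin 2), ∀ᵐ ω ∂μ, 0 < p ω i := by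
    intro i
    rw [ae_iff]
    have h1 : {ω | ¬ 0 < p ω i} = (fun ω => p ω i) ⁻¹' Set.Iic 0 := by
      ext ω; simp [not_lt]
    rw [h1, hmap i _ measurableSet_Iic]
    have h2 : Set.Iic (0:ℝ) ∩ Set.Icc 0 1 = {0} := by
      ext x; simp only [Set.mem_inter_iff, Set.mem_Iic, Set.mem_Icc, Set.mem_singleton_iff]
      constructor
      · rintro ⟨h, h0, -⟩; linarith
      · rintro rfl; norm_num
    rw [h2]; exact measure_singleton 0
  -- pointwise bound
  have key : ∀ ω, 0 < p ω 0 → 0 < p ω 1 →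
      ((Finset.univ.filter (fun i => p ω i ≤ A (suR A (p ω)))).card : ℝ)
        / ((max (suR A (p ω)) 1 : ℕ) : ℝ) ≤ G.indicator (fun _ => (1:ℝ)) ω := by
    intro ω h0 h1
    rw [hA, suR_char a1 a2 (p ω)]
    have hAx : ∀ x : ℝ, x = x := fun x => rfl
    by_cases h2 : max (p ω 0) (p ω 1) ≤ a2
    · -- R = 2
      rw [if_pos h2]
      have hA2 : (fun j => if j = 0 then (0:ℝ) else if j = 1 then a1 else a2) 2 = a2 := by
        norm_num
      rw [hA2]
      have hωG : ω ∈ G := by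
        by_cases hc0 : p ω 0 ≤ a1
        · exact Or.inl (Or.inl hc0)
        · by_cases hc1 : p ω 1 ≤ a1
          · exact Or.inl (Or.inr hc1)
          · exact Or.inr ⟨lt_of_not_ge hc0, le_trans (le_max_left _ _) h2⟩
      rw [Set.indicator_of_mem hωG]
      rw [div_le_one (by norm_num)]
      have hc : (Finset.univ.filter (fun i => p ω i ≤ a2)).card ≤ 2 := by
        have := Finset.card_filter_le (Finset.univ : Finset (Fin 2))
          (fun i => p ω i ≤ a2)
        simpa using this
      calc ((Finset.univ.filter (fun i => p ω i ≤ a2)).card : ℝ) ≤ 2 := by exact_mod_cast hc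
        _ = ((max 2 1 : ℕ) : ℝ) := by norm_num
    · by_cases hm : min (p ω 0) (p ω 1) ≤ a1
      · -- R = 1
        have hωG : ω ∈ G := by
          rcases min_le_iff.mp hm with h | h
          · exact Or.inl (Or.inl h)
          · exact Or.inl (Or.inr h)
        rw [Set.indicator_of_mem hωG]
        rw [if_neg h2, if_pos hm]
        have hA1 : (fun j => if j = 0 then (0:ℝ) else if j = 1 then a1 else a2) 1 = a1 := by
          norm_num
        rw [hA1]
        rw [div_le_one (by norm_num)]
        have hcard : (Finset.univ.filter (fun i => p ω i ≤ a1)).card ≤ 1 := by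
          rw [show (Finset.univ.filter (fun i => p ω i ≤ a1)).card
              = countLE (p ω) a1 from rfl, countLE_two]
          by_cases hb0 : p ω 0 ≤ a1 <;> by_cases hb1 : p ω 1 ≤ a1
          · exfalso
            apply h2
            exact max_le (le_trans hb0 (le_of_lt h12)) (le_trans hb1 (le_of_lt h12))
          all_goals simp [hb0, hb1]
        calc ((Finset.univ.filter (fun i => p ω i ≤ a1)).card : ℝ) ≤ 1 := by exact_mod_cast hcard
          _ = ((max 1 1 : ℕ) : ℝ) := by norm_num
      · -- R = 0
        rw [if_neg h2, if_neg hm]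
        have hA0 : (fun j => if j = 0 then (0:ℝ) else if j = 1 then a1 else a2) 0 = 0 := by
          norm_num
        rw [hA0]
        have hcard : (Finset.univ.filter (fun i => p ω i ≤ (0:ℝ))).card = 0 := by
          rw [show (Finset.univ.filter (fun i => p ω i ≤ (0:ℝ))).card
              = countLE (p ω) 0 from rfl, countLE_two]
          rw [if_neg (not_le.mpr h0), if_neg (not_le.mpr h1)]
        rw [hcard]
        simp only [Nat.cast_zero, zero_div]
        exact Set.indicator_nonneg (fun _ _ => zero_le_one) ω
  -- bound the integral
  have hInd : Integrable (G.indicator (fun _ => (1:ℝ))) μ :=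
    (integrable_const 1).indicator hGm
  have hmono : suFDR μ A p Finset.univ ≤ ∫ ω, G.indicator (fun _ => (1:ℝ)) ω ∂μ := by
    rw [suFDR, FDR]
    apply integral_mono_of_nonneg
    · exact Filter.Eventually.of_forall (fun ω => by positivity)
    · exact hInd
    · filter_upwards [hpos 0, hpos 1] with ω h0 h1
      exact key ω h0 h1
  have hindval : ∫ ω, G.indicator (fun _ => (1:ℝ)) ω ∂μ = (μ G).toReal := by
    rw [integral_indicator_const (1:ℝ) hGm]; simp [Measure.real]
  -- measure bounds
  have hμE1 : μ E1 ≤ ENNReal.ofReal a1 := by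
    rw [hE1, hmap 0 _ measurableSet_Iic]
    have hsub : Set.Iic a1 ∩ Set.Icc 0 1 ⊆ Set.Icc 0 a1 := by
      rintro x ⟨hx1, hx2, -⟩; exact ⟨hx2, hx1⟩
    calc volume (Set.Iic a1 ∩ Set.Icc 0 1) ≤ volume (Set.Icc 0 a1) := measure_mono hsub
      _ = ENNReal.ofReal a1 := by rw [Real.volume_Icc, sub_zero]
  have hμE2 : μ E2 ≤ ENNReal.ofReal a1 := by
    rw [hE2, hmap 1 _ measurableSet_Iic]
    have hsub : Set.Iic a1 ∩ Set.Icc 0 1 ⊆ Set.Icc 0 a1 := by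
      rintro x ⟨hx1, hx2, -⟩; exact ⟨hx2, hx1⟩
    calc volume (Set.Iic a1 ∩ Set.Icc 0 1) ≤ volume (Set.Icc 0 a1) := measure_mono hsub
      _ = ENNReal.ofReal a1 := by rw [Real.volume_Icc, sub_zero]
  have hμE3 : μ E3 ≤ ENNReal.ofReal (a2 - a1) := by
    rw [hE3, hmap 0 _ measurableSet_Ioc]
    calc volume (Set.Ioc a1 a2 ∩ Set.Icc 0 1) ≤ volume (Set.Ioc a1 a2) :=
          measure_mono Set.inter_subset_left
      _ = ENNReal.ofReal (a2 - a1) := Real.volume_Ioc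
  have hμG : μ G ≤ ENNReal.ofReal (a1 + a2) := by
    calc μ G ≤ μ (E1 ∪ E2) + μ E3 := measure_union_le _ _
      _ ≤ (μ E1 + μ E2) + μ E3 := by gcongr; exact measure_union_le _ _
      _ ≤ (ENNReal.ofReal a1 + ENNReal.ofReal a1) + ENNReal.ofReal (a2 - a1) :=
          add_le_add (add_le_add hμE1 hμE2) hμE3
      _ = ENNReal.ofReal (a1 + a2) := by
          rw [← ENNReal.ofReal_add ha1.le ha1.le,
            ← ENNReal.ofReal_add (by linarith) (by linarith)]
          ring_nf
  have hfin : (μ G).toReal ≤ min (a1 + a2) 1 := by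
    apply le_min
    · exact ENNReal.toReal_le_of_le_ofReal (by linarith) hμG
    · have : μ G ≤ 1 := prob_le_one
      calc (μ G).toReal ≤ (1 : ENNReal).toReal := ENNReal.toReal_mono ENNReal.one_ne_top this
        _ = 1 := ENNReal.toReal_one
  calc suFDR μ A p Finset.univ ≤ ∫ ω, G.indicator (fun _ => (1:ℝ)) ω ∂μ := hmono
    _ = (μ G).toReal := hindval
    _ ≤ min (a1 + a2) 1 := hfin
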